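/- For all $\theta \in [0, \pi]$ and $1 \leq \tau_2 \leq \tau_1$, the inequality $2\operatorname{arth}\sqrt{\frac{\theta^2 + (\tau_1-\tau_2)^2}{\theta^2 + (\tau_1+\tau_2)^2}} \leq \frac{\theta}{\tau_1} + \log\tau_1 - \log\tau_2$ holds. -/

import Mathlib

open Real

set_option maxHeartbeats 1000000

/-- The inverse hyperbolic tangent, `arth t = (1/2) log ((1+t)/(1-t))`. -/
noncomputable def arth (t : ℝ) : ℝ := Real.log ((1 + t) / (1 - t)) / 2

theorem stmt_7 (θ τ₁ τ₂ : ℝ) (hθ0 : 0 ≤ θ) (hθπ : θ ≤ π) (hτ₂ : 1 ≤ τ₂) (h21 : τ₂ ≤ τ₁) :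
    2 * arth (Real.sqrt ((θ ^ 2 + (τ₁ - τ₂) ^ 2) / (θ ^ 2 + (τ₁ + τ₂) ^ 2)))
      ≤ θ / τ₁ + Real.log τ₁ - Real.log τ₂ := by
  have hτ₂0 : (0:ℝ) < τ₂ := lt_of_lt_of_le one_pos hτ₂
  have hτ₁0 : (0:ℝ) < τ₁ := lt_of_lt_of_le hτ₂0 h21
  set A : ℝ := θ ^ 2 + (τ₁ + τ₂) ^ 2 with hA
  set B : ℝ := θ ^ 2 + (τ₁ - τ₂) ^ 2 with hB
  have hB0 : 0 ≤ B := by positivity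
  have hBA : B < A := by rw [hA, hB]; nlinarith
  have hA0 : 0 < A := lt_of_le_of_lt hB0 hBA
  set a : ℝ := Real.sqrt A with ha
  set b : ℝ := Real.sqrt B with hb
  have ha2 : a ^ 2 = A := Real.sq_sqrt hA0.le
  have hb2 : b ^ 2 = B := Real.sq_sqrt hB0
  have hb0 : 0 ≤ b := Real.sqrt_nonneg _
  have hba : b < a := Real.sqrt_lt_sqrt hB0 hBA
  have ha0 : 0 < a := lt_of_le_of_lt hb0 hba
  have hdiff : a ^ 2 - b ^ 2 = 4 * τ₁ * τ₂ := by rw [ha2, hb2, hA, hB]; ring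
  have hs : Real.sqrt (B / A) = b / a := Real.sqrt_div hB0 A
  set E : ℝ := Real.exp (θ / (2 * τ₁)) with hE
  have hE0 : 0 < E := Real.exp_pos _
  have hu0 : 0 ≤ θ / (2 * τ₁) := by positivity
  have hEq : 1 + θ / (2 * τ₁) + (θ / (2 * τ₁)) ^ 2 / 2 ≤ E :=
    Real.quadratic_le_exp_of_nonneg hu0
  -- Step 2: c + θ ≤ 2 τ₁ E, where c = sqrt (θ² + 4τ₁²)
  set c : ℝ := Real.sqrt (θ ^ 2 + 4 * τ₁ ^ 2) with hc
  have hc2 : c ^ 2 = θ ^ 2 + 4 * τ₁ ^ 2 := Real.sq_sqrt (by positivity)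
  have hc0 : 0 ≤ c := Real.sqrt_nonneg _
  have hstep2 : c + θ ≤ 2 * τ₁ * E := by
    have hRpos : 0 ≤ 2 * τ₁ * E - θ := by
      have h1 : 2 * τ₁ * (1 + θ / (2 * τ₁)) ≤ 2 * τ₁ * E := by
        apply mul_le_mul_of_nonneg_left _ (by positivity)
        nlinarith [sq_nonneg (θ / (2 * τ₁))]
      have h2 : 2 * τ₁ * (1 + θ / (2 * τ₁)) = 2 * τ₁ + θ := by field_simp
      linarith
    have hsq : c ^ 2 ≤ (2 * τ₁ * E - θ) ^ 2 := by
      rw [hc2]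
      set u : ℝ := θ / (2 * τ₁) with hu
      have hθu : θ = 2 * τ₁ * u := by rw [hu]; field_simp
      have h3 : 1 + u ^ 2 / 2 ≤ E - u := by linarith
      have h4 : (1 + u ^ 2 / 2) ^ 2 ≤ (E - u) ^ 2 :=
        pow_le_pow_left₀ (by positivity) h3 2
      have key : (1 : ℝ) ≤ E ^ 2 - 2 * u * E := by
        nlinarith [h4, sq_nonneg (u ^ 2)]
      have key2 : 4 * τ₁ ^ 2 * 1 ≤ 4 * τ₁ ^ 2 * (E ^ 2 - 2 * u * E) :=
        mul_le_mul_of_nonneg_left key (by positivity)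
      rw [hθu]
      nlinarith [key2]
    nlinarith [hsq, hc0, hRpos]
  -- Step 1: a + b ≤ c + θ
  have hstep1 : a + b ≤ c + θ := by
    have habAB : (a * b) ^ 2 = A * B := by rw [mul_pow, ha2, hb2]
    have hab : a * b ≤ (τ₁ ^ 2 - τ₂ ^ 2) + θ * c := by
      have hrhs0 : 0 ≤ (τ₁ ^ 2 - τ₂ ^ 2) + θ * c := by
        nlinarith [mul_nonneg hθ0 hc0]
      nlinarith [mul_nonneg hθ0 hc0, mul_nonneg ha0.le hb0, hc2, habAB,
        mul_nonneg (mul_nonneg hθ0 hc0) (by nlinarith : (0:ℝ) ≤ τ₁ ^ 2 - τ₂ ^ 2),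
        mul_nonneg (mul_nonneg hθ0 hθ0) (by nlinarith : (0:ℝ) ≤ τ₁ ^ 2 - τ₂ ^ 2)]
    have hsq : (a + b) ^ 2 ≤ (c + θ) ^ 2 := by
      have : a ^ 2 + b ^ 2 = 2 * θ ^ 2 + 2 * τ₁ ^ 2 + 2 * τ₂ ^ 2 := by
        rw [ha2, hb2, hA, hB]; ring
      nlinarith [this, hab, hc2]
    nlinarith [hsq, ha0.le, hb0, hc0, hθ0]
  have hmain : a + b ≤ 2 * τ₁ * E := le_trans hstep1 hstep2
  -- ratio identity
  have h1s : 0 < 1 - b / a := by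
    rw [sub_pos, div_lt_one ha0]; exact hba
  have h4 : (4:ℝ) * τ₁ * τ₂ = (a - b) * (a + b) := by linear_combination -hdiff
  have habpos : (0:ℝ) < (a - b) * (a + b) := mul_pos (sub_pos.2 hba) (by positivity)
  have hratio : (1 + b / a) / (1 - b / a) = (a + b) ^ 2 / (4 * τ₁ * τ₂) := by
    rw [h4, div_eq_div_iff h1s.ne' habpos.ne']
    field_simp
  have hE2 : E ^ 2 = Real.exp (θ / τ₁) := by
    rw [hE, pow_two, ← Real.exp_add]
    congr 1
    field_simp
    ring
  have hK : (a + b) ^ 2 / (4 * τ₁ * τ₂) ≤ τ₁ / τ₂ * Real.exp (θ / τ₁) := by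
    have h1 : (a + b) ^ 2 ≤ 4 * τ₁ ^ 2 * Real.exp (θ / τ₁) := by
      rw [← hE2]
      calc (a + b) ^ 2 ≤ (2 * τ₁ * E) ^ 2 :=
            pow_le_pow_left₀ (add_nonneg ha0.le hb0) hmain 2
        _ = 4 * τ₁ ^ 2 * E ^ 2 := by ring
    rw [div_le_iff₀ (by positivity)]
    have h2 : τ₁ / τ₂ * Real.exp (θ / τ₁) * (4 * τ₁ * τ₂) = 4 * τ₁ ^ 2 * Real.exp (θ / τ₁) := by
      field_simp
    linarith [h2 ▸ h1]
  -- conclude with logs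
  rw [hs]
  have harth : 2 * arth (b / a) = Real.log ((1 + b / a) / (1 - b / a)) := by
    unfold arth; ring
  rw [harth, hratio]
  have hXpos : 0 < (a + b) ^ 2 / (4 * τ₁ * τ₂) := by positivity
  have hlog : Real.log ((a + b) ^ 2 / (4 * τ₁ * τ₂)) ≤
      Real.log (τ₁ / τ₂ * Real.exp (θ / τ₁)) := by
    apply Real.log_le_log hXpos hK
  have hlogK : Real.log (τ₁ / τ₂ * Real.exp (θ / τ₁)) = Real.log τ₁ - Real.log τ₂ + θ / τ₁ := by
    rw [Real.log_mul (by positivity) (Real.exp_ne_zero _), Real.log_div (ne_of_gt hτ₁0)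
      (ne_of_gt hτ₂0), Real.log_exp]
  linarith [hlog, hlogK ▸ hlog]
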